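/- Let Z have the law PN(μ_X,μ_Y;σ_X²,σ_Y²;ρ) and write m = E[Z] = μ_Xμ_Y + ρσ_Xσ_Y. Then the kurtosis of Z, namely Kurt[Z] = E[(Z−m)⁴]/(E[(Z−m)²])², is given by Kurt[Z] = [3(r_X⁴ + r_Y⁴ + 4ρ r_Xr_Y(r_X²+r_Y²) + 2(2ρ²+1)r_X²r_Y²) + 3(2(7ρ²+3)(r_X²+r_Y²) + 4ρ(3ρ²+7)r_Xr_Y + 3ρ⁴ + 14ρ² + 3)] / (r_X² + r_Y² + 2ρ r_Xr_Y + ρ² + 1)². -/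

import Mathlib

open MeasureTheory ProbabilityTheory

/-- The product-normal law `PN(μX, μY; σX², σY²; ρ)`: the law of `X * Y` where
`X = μX + σX * U`, `Y = μY + σY * (ρ * U + √(1 - ρ²) * V)` and `U, V` are independent
standard normal random variables. -/
noncomputable def PN (μX μY σX σY ρ : ℝ) : Measure ℝ :=
  Measure.map
    (fun p : ℝ × ℝ =>
      (μX + σX * p.1) * (μY + σY * (ρ * p.1 + Real.sqrt (1 - ρ ^ 2) * p.2)))
    ((gaussianReal 0 1).prod (gaussianReal 0 1))

/-- The law of the mean `Z̄ₙ = n⁻¹ ∑ᵢ Zᵢ` of `n` independent random variables with law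
`PN(μX, μY; σX², σY²; ρ)`. -/
noncomputable def PNbar (n : ℕ) (μX μY σX σY ρ : ℝ) : Measure ℝ :=
  Measure.map (fun ω : Fin n → ℝ => (∑ i, ω i) / (n : ℝ))
    (Measure.pi fun _ : Fin n => PN μX μY σX σY ρ)

open MeasureTheory ProbabilityTheory Real
open scoped ENNReal NNReal

noncomputable def stdP : ℝ → ℝ := fun x => (Real.sqrt (2 * π))⁻¹ * Real.exp (-x ^ 2 / 2)

lemma stdP_eq : gaussianPDFReal 0 1 = stdP := by
  funext x
  simp [gaussianPDFReal, stdP]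

lemma stdP_pos (x : ℝ) : 0 < stdP x := by
  have := Real.pi_pos
  unfold stdP
  positivity

lemma hasDerivAt_stdP (x : ℝ) : HasDerivAt stdP (-x * stdP x) x := by
  have h1 : HasDerivAt (fun x : ℝ => -x ^ 2 / 2) (-x) x := by
    have := ((hasDerivAt_pow 2 x).neg).div_const 2
    refine this.congr_deriv ?_
    push_cast; ring
  have h2 := (h1.exp).const_mul (Real.sqrt (2 * π))⁻¹
  refine h2.congr_deriv ?_
  unfold stdP; ring

lemma integrable_pow_mul_stdP (n : ℕ) :
    Integrable (fun x : ℝ => x ^ n * stdP x) := by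
  have h := (integrable_rpow_mul_exp_neg_mul_sq (b := 1/2) (by norm_num) (s := n)
    (lt_of_lt_of_le neg_one_lt_zero n.cast_nonneg)).const_mul (Real.sqrt (2 * π))⁻¹
  refine h.congr (Filter.Eventually.of_forall fun x => ?_)
  show (Real.sqrt (2 * π))⁻¹ * (x ^ (n : ℝ) * rexp (-(1/2) * x ^ 2)) = x ^ n * stdP x
  rw [Real.rpow_natCast, show -(1/2 : ℝ) * x ^ 2 = -x ^ 2 / 2 by ring]
  unfold stdP; ring

lemma integrable_stdP : Integrable stdP := by
  simpa using integrable_pow_mul_stdP 0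

lemma integral_stdP : ∫ x, stdP x = 1 := by
  rw [← stdP_eq]
  exact integral_gaussianPDFReal_eq_one 0 one_ne_zero

lemma integral_pow_mul_stdP_rec (n : ℕ) :
    ∫ x, x ^ (n + 2) * stdP x = (n + 1 : ℝ) * ∫ x, x ^ n * stdP x := by
  have hderiv : ∀ x : ℝ, HasDerivAt (fun x => x ^ (n + 1) * stdP x)
      ((n + 1 : ℝ) * (x ^ n * stdP x) - x ^ (n + 2) * stdP x) x := by
    intro x
    have := (hasDerivAt_pow (n + 1) x).mul (hasDerivAt_stdP x)
    refine this.congr_deriv ?_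
    push_cast; ring
  have hi1 : Integrable (fun x : ℝ => (n + 1 : ℝ) * (x ^ n * stdP x)) :=
    (integrable_pow_mul_stdP n).const_mul _
  have hint : Integrable (fun x : ℝ =>
      (n + 1 : ℝ) * (x ^ n * stdP x) - x ^ (n + 2) * stdP x) :=
    hi1.sub (integrable_pow_mul_stdP (n + 2))
  have h0 := integral_eq_zero_of_hasDerivAt_of_integrable hderiv hint
    (integrable_pow_mul_stdP (n + 1))
  rw [integral_sub hi1 (integrable_pow_mul_stdP (n + 2)), integral_const_mul] at h0
  linarith

lemma integral_id_mul_stdP : ∫ x, x ^ 1 * stdP x = 0 := by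
  have hint : Integrable (fun x : ℝ => -x * stdP x) := by
    refine ((integrable_pow_mul_stdP 1).neg).congr (Filter.Eventually.of_forall fun x => ?_)
    show -(x ^ 1 * stdP x) = -x * stdP x; ring
  have h0 := integral_eq_zero_of_hasDerivAt_of_integrable hasDerivAt_stdP hint integrable_stdP
  have : ∫ x, -x * stdP x = -∫ x, x ^ 1 * stdP x := by
    rw [← integral_neg]
    congr 1; funext x; ring
  linarith [this ▸ h0]

lemma gaussianReal_eq_withDensity :
    gaussianReal 0 1 = volume.withDensity (fun x => ((stdP x).toNNReal : ℝ≥0∞)) := by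
  rw [gaussianReal_of_var_ne_zero 0 one_ne_zero]
  congr 1
  funext x
  unfold gaussianPDF
  rw [stdP_eq, ENNReal.ofReal_eq_coe_nnreal (stdP_pos x).le]
  congr 1
  ext
  simp [Real.coe_toNNReal _ (stdP_pos x).le]

lemma measurable_stdP_toNNReal : Measurable fun x => (stdP x).toNNReal := by
  unfold stdP; fun_prop

lemma integral_gaussianReal_eq (g : ℝ → ℝ) :
    ∫ x, g x ∂(gaussianReal 0 1) = ∫ x, g x * stdP x := by
  rw [gaussianReal_eq_withDensity, integral_withDensity_eq_integral_smul measurable_stdP_toNNReal]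
  congr 1; funext x
  rw [NNReal.smul_def, Real.coe_toNNReal _ (stdP_pos x).le, smul_eq_mul, mul_comm]

lemma integrable_gaussianReal_of (g : ℝ → ℝ) (hg : Integrable (fun x => g x * stdP x)) :
    Integrable g (gaussianReal 0 1) := by
  rw [gaussianReal_eq_withDensity, integrable_withDensity_iff_integrable_smul
    measurable_stdP_toNNReal]
  refine hg.congr (Filter.Eventually.of_forall fun x => ?_)
  show g x * stdP x = (stdP x).toNNReal • g x
  rw [NNReal.smul_def, Real.coe_toNNReal _ (stdP_pos x).le, smul_eq_mul, mul_comm]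

lemma gint (n : ℕ) : Integrable (fun x : ℝ => x ^ n) (gaussianReal 0 1) :=
  integrable_gaussianReal_of _ (integrable_pow_mul_stdP n)

lemma gmom0 : ∫ x, x ^ 0 ∂(gaussianReal 0 1) = 1 := by
  rw [integral_gaussianReal_eq]; simpa using integral_stdP
lemma gmom1 : ∫ x, x ^ 1 ∂(gaussianReal 0 1) = 0 := by
  rw [integral_gaussianReal_eq]; exact integral_id_mul_stdP
lemma gmom2 : ∫ x, x ^ 2 ∂(gaussianReal 0 1) = 1 := by
  rw [integral_gaussianReal_eq, show (2:ℕ) = 0 + 2 by rfl, integral_pow_mul_stdP_rec]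
  simpa using integral_stdP
lemma gmom3 : ∫ x, x ^ 3 ∂(gaussianReal 0 1) = 0 := by
  rw [integral_gaussianReal_eq, show (3:ℕ) = 1 + 2 by rfl, integral_pow_mul_stdP_rec,
    integral_id_mul_stdP]
  ring
lemma gmom4 : ∫ x, x ^ 4 ∂(gaussianReal 0 1) = 3 := by
  have := gmom2
  rw [integral_gaussianReal_eq] at this ⊢
  rw [show (4:ℕ) = 2 + 2 by rfl, integral_pow_mul_stdP_rec, this]
  norm_num
lemma gmom5 : ∫ x, x ^ 5 ∂(gaussianReal 0 1) = 0 := by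
  have := gmom3
  rw [integral_gaussianReal_eq] at this ⊢
  rw [show (5:ℕ) = 3 + 2 by rfl, integral_pow_mul_stdP_rec, this]
  ring
lemma gmom6 : ∫ x, x ^ 6 ∂(gaussianReal 0 1) = 15 := by
  have := gmom4
  rw [integral_gaussianReal_eq] at this ⊢
  rw [show (6:ℕ) = 4 + 2 by rfl, integral_pow_mul_stdP_rec, this]
  norm_num
lemma gmom7 : ∫ x, x ^ 7 ∂(gaussianReal 0 1) = 0 := by
  have := gmom5
  rw [integral_gaussianReal_eq] at this ⊢
  rw [show (7:ℕ) = 5 + 2 by rfl, integral_pow_mul_stdP_rec, this]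
  ring
lemma gmom8 : ∫ x, x ^ 8 ∂(gaussianReal 0 1) = 105 := by
  have := gmom6
  rw [integral_gaussianReal_eq] at this ⊢
  rw [show (8:ℕ) = 6 + 2 by rfl, integral_pow_mul_stdP_rec, this]
  norm_num

lemma integrable_polyeval (P : Polynomial ℝ) :
    Integrable (fun x => Polynomial.eval x P) (gaussianReal 0 1) := by
  induction P using Polynomial.induction_on with
  | C a => simp only [Polynomial.eval_C]; exact integrable_const (μ := gaussianReal 0 1) a
  | add p q hp hq => simp only [Polynomial.eval_add]; exact hp.add hq
  | monomial n a _ =>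
      have h := (gint (n + 1)).const_mul a
      refine h.congr (Filter.Eventually.of_forall fun x => ?_)
      simp

lemma integral_poly8 (c0 c1 c2 c3 c4 c5 c6 c7 c8 : ℝ) :
    ∫ x, (c0 + c1 * x ^ 1 + c2 * x ^ 2 + c3 * x ^ 3 + c4 * x ^ 4 + c5 * x ^ 5 + c6 * x ^ 6
        + c7 * x ^ 7 + c8 * x ^ 8) ∂(gaussianReal 0 1)
      = c0 + c2 + 3 * c4 + 15 * c6 + 105 * c8 := by
  have i : ∀ (k : ℕ) (c : ℝ), Integrable (fun x : ℝ => c * x ^ k) (gaussianReal 0 1) :=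
    fun k c => (gint k).const_mul c
  have p0 : Integrable (fun _ : ℝ => c0) (gaussianReal 0 1) := integrable_const _
  have p1 : Integrable (fun x : ℝ => c0 + c1 * x ^ 1) (gaussianReal 0 1) :=
    p0.add (i 1 c1)
  have p2 : Integrable (fun x : ℝ => c0 + c1 * x ^ 1 + c2 * x ^ 2) (gaussianReal 0 1) :=
    p1.add (i 2 c2)
  have p3 : Integrable (fun x : ℝ => c0 + c1 * x ^ 1 + c2 * x ^ 2 + c3 * x ^ 3) (gaussianReal 0 1) :=
    p2.add (i 3 c3)
  have p4 : Integrable (fun x : ℝ => c0 + c1 * x ^ 1 + c2 * x ^ 2 + c3 * x ^ 3 + c4 * x ^ 4) (gaussianReal 0 1) :=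
    p3.add (i 4 c4)
  have p5 : Integrable (fun x : ℝ => c0 + c1 * x ^ 1 + c2 * x ^ 2 + c3 * x ^ 3 + c4 * x ^ 4 + c5 * x ^ 5) (gaussianReal 0 1) :=
    p4.add (i 5 c5)
  have p6 : Integrable (fun x : ℝ => c0 + c1 * x ^ 1 + c2 * x ^ 2 + c3 * x ^ 3 + c4 * x ^ 4 + c5 * x ^ 5 + c6 * x ^ 6) (gaussianReal 0 1) :=
    p5.add (i 6 c6)
  have p7 : Integrable (fun x : ℝ => c0 + c1 * x ^ 1 + c2 * x ^ 2 + c3 * x ^ 3 + c4 * x ^ 4 + c5 * x ^ 5 + c6 * x ^ 6 + c7 * x ^ 7) (gaussianReal 0 1) :=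
    p6.add (i 7 c7)
  rw [integral_add p7 (i 8 c8), integral_add p6 (i 7 c7), integral_add p5 (i 6 c6),
    integral_add p4 (i 5 c5), integral_add p3 (i 4 c4), integral_add p2 (i 3 c3),
    integral_add p1 (i 2 c2), integral_add p0 (i 1 c1)]
  simp only [integral_const_mul, gmom1, gmom2, gmom3, gmom4, gmom5, gmom6, gmom7, gmom8,
    integral_const, measure_univ, ENNReal.toReal_one, probReal_univ, one_smul, smul_eq_mul]
  ring

lemma integral_poly4 (c0 c1 c2 c3 c4 : ℝ) :
    ∫ x, (c0 + c1 * x ^ 1 + c2 * x ^ 2 + c3 * x ^ 3 + c4 * x ^ 4) ∂(gaussianReal 0 1)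
      = c0 + c2 + 3 * c4 := by
  have i : ∀ (k : ℕ) (c : ℝ), Integrable (fun x : ℝ => c * x ^ k) (gaussianReal 0 1) :=
    fun k c => (gint k).const_mul c
  have p0 : Integrable (fun _ : ℝ => c0) (gaussianReal 0 1) := integrable_const _
  have p1 : Integrable (fun x : ℝ => c0 + c1 * x ^ 1) (gaussianReal 0 1) :=
    p0.add (i 1 c1)
  have p2 : Integrable (fun x : ℝ => c0 + c1 * x ^ 1 + c2 * x ^ 2) (gaussianReal 0 1) :=
    p1.add (i 2 c2)
  have p3 : Integrable (fun x : ℝ => c0 + c1 * x ^ 1 + c2 * x ^ 2 + c3 * x ^ 3) (gaussianReal 0 1) :=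
    p2.add (i 3 c3)
  rw [integral_add p3 (i 4 c4), integral_add p2 (i 3 c3), integral_add p1 (i 2 c2),
    integral_add p0 (i 1 c1)]
  simp only [integral_const_mul, gmom1, gmom2, gmom3, gmom4,
    integral_const, measure_univ, ENNReal.toReal_one, probReal_univ, one_smul, smul_eq_mul]
  ring

lemma inner4 (a b : ℝ) :
    ∫ v, (a + b * v) ^ 4 ∂(gaussianReal 0 1) = a ^ 4 + 6 * a ^ 2 * b ^ 2 + 3 * b ^ 4 := by
  have h : ∫ v, (a + b * v) ^ 4 ∂(gaussianReal 0 1)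
      = ∫ v, (a ^ 4 + (4 * a ^ 3 * b) * v ^ 1 + (6 * a ^ 2 * b ^ 2) * v ^ 2
          + (4 * a * b ^ 3) * v ^ 3 + b ^ 4 * v ^ 4) ∂(gaussianReal 0 1) := by
    congr 1; funext v; ring
  rw [h, integral_poly4]; try ring

lemma inner2 (a b : ℝ) :
    ∫ v, (a + b * v) ^ 2 ∂(gaussianReal 0 1) = a ^ 2 + b ^ 2 := by
  have h : ∫ v, (a + b * v) ^ 2 ∂(gaussianReal 0 1)
      = ∫ v, (a ^ 2 + (2 * a * b) * v ^ 1 + b ^ 2 * v ^ 2 + 0 * v ^ 3 + 0 * v ^ 4)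
          ∂(gaussianReal 0 1) := by
    congr 1; funext v; ring
  rw [h, integral_poly4]; try ring

lemma moment4 (a b c d e : ℝ) :
    ∫ p : ℝ × ℝ, (a + b * p.1 + c * p.2 + d * p.1 ^ 2 + e * (p.1 * p.2)) ^ 4 ∂((gaussianReal 0 1).prod (gaussianReal 0 1))
      = 9*e^4 + 90*d^2*e^2 + 105*d^4 + 18*c^2*e^2 + 18*c^2*d^2 + 3*c^4 + 72*b*c*d*e + 18*b^2*e^2 + 90*b^2*d^2 + 6*b^2*c^2 + 3*b^4 + 36*a*d*e^2 + 60*a*d^3 + 12*a*c^2*d + 24*a*b*c*e + 36*a*b^2*d + 6*a^2*e^2 + 18*a^2*d^2 + 6*a^2*c^2 + 6*a^2*b^2 + 4*a^3*d + a^4 := by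
  have H : ∀ (P : Polynomial ℝ) (j : ℕ),
      Integrable (fun p : ℝ × ℝ => Polynomial.eval p.1 P * p.2 ^ j) ((gaussianReal 0 1).prod (gaussianReal 0 1)) :=
    fun P j => (integrable_polyeval P).mul_prod (gint j)
  have hint : Integrable
      (fun p : ℝ × ℝ => (a + b * p.1 + c * p.2 + d * p.1 ^ 2 + e * (p.1 * p.2)) ^ 4) ((gaussianReal 0 1).prod (gaussianReal 0 1)) := by
    refine (((((H ((Polynomial.C a + Polynomial.C b * Polynomial.X + Polynomial.C d * Polynomial.X ^ 2) ^ 4) 0).add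
      (H (Polynomial.C 4 * (Polynomial.C a + Polynomial.C b * Polynomial.X + Polynomial.C d * Polynomial.X ^ 2) ^ 3 * (Polynomial.C c + Polynomial.C e * Polynomial.X)) 1)).add
      (H (Polynomial.C 6 * (Polynomial.C a + Polynomial.C b * Polynomial.X + Polynomial.C d * Polynomial.X ^ 2) ^ 2 * (Polynomial.C c + Polynomial.C e * Polynomial.X) ^ 2) 2)).add
      (H (Polynomial.C 4 * (Polynomial.C a + Polynomial.C b * Polynomial.X + Polynomial.C d * Polynomial.X ^ 2) * (Polynomial.C c + Polynomial.C e * Polynomial.X) ^ 3) 3)).add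
      (H ((Polynomial.C c + Polynomial.C e * Polynomial.X) ^ 4) 4)).congr (Filter.Eventually.of_forall fun p => ?_)
    simp only [Pi.add_apply, Polynomial.eval_add, Polynomial.eval_mul, Polynomial.eval_pow,
      Polynomial.eval_C, Polynomial.eval_X, Polynomial.eval_ofNat]
    ring
  rw [integral_prod _ hint]
  have h1 : (fun u : ℝ => ∫ v, (a + b * u + c * v + d * u ^ 2 + e * (u * v)) ^ 4
        ∂(gaussianReal 0 1))
      = fun u : ℝ => (3*c^4 + 6*a^2*c^2 + a^4) + (12*c^3*e + 12*a*b*c^2 + 12*a^2*c*e + 4*a^3*b) * u ^ 1 + (18*c^2*e^2 + 6*b^2*c^2 + 12*a*c^2*d + 24*a*b*c*e + 6*a^2*e^2 + 6*a^2*b^2 + 4*a^3*d) * u ^ 2 + (12*c*e^3 + 12*b*c^2*d + 12*b^2*c*e + 24*a*c*d*e + 12*a*b*e^2 + 4*a*b^3 + 12*a^2*b*d) * u ^ 3 + (3*e^4 + 6*c^2*d^2 + 24*b*c*d*e + 6*b^2*e^2 + b^4 + 12*a*d*e^2 + 12*a*b^2*d + 6*a^2*d^2) * u ^ 4 + (12*c*d^2*e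 + 12*b*d*e^2 + 4*b^3*d + 12*a*b*d^2) * u ^ 5 + (6*d^2*e^2 + 6*b^2*d^2 + 4*a*d^3) * u ^ 6 + (4*b*d^3) * u ^ 7 + (d^4) * u ^ 8 := by
    funext u
    rw [show (fun v : ℝ => (a + b * u + c * v + d * u ^ 2 + e * (u * v)) ^ 4)
        = fun v : ℝ => ((a + b * u + d * u ^ 2) + (c + e * u) * v) ^ 4 from
        funext fun v => by ring, inner4]
    ring
  calc ∫ u, ∫ v, (a + b * u + c * v + d * u ^ 2 + e * (u * v)) ^ 4
        ∂(gaussianReal 0 1) ∂(gaussianReal 0 1)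
      = ∫ u, ((3*c^4 + 6*a^2*c^2 + a^4) + (12*c^3*e + 12*a*b*c^2 + 12*a^2*c*e + 4*a^3*b) * u ^ 1 + (18*c^2*e^2 + 6*b^2*c^2 + 12*a*c^2*d + 24*a*b*c*e + 6*a^2*e^2 + 6*a^2*b^2 + 4*a^3*d) * u ^ 2 + (12*c*e^3 + 12*b*c^2*d + 12*b^2*c*e + 24*a*c*d*e + 12*a*b*e^2 + 4*a*b^3 + 12*a^2*b*d) * u ^ 3 + (3*e^4 + 6*c^2*d^2 + 24*b*c*d*e + 6*b^2*e^2 + b^4 + 12*a*d*e^2 + 12*a*b^2*d + 6*a^2*d^2) * u ^ 4 + (12*c*d^2*e + 12*b*d*e^2 + 4*b^3*d + 12*a*b*d^2) * u ^ 5 + (6*d^2*e^2 + 6*b^2*d^2 + 4*a*d^3) * u ^ 6 + (4*b*d^3) * u ^ 7 + (d^4) * u ^ 8) ∂(gaussianReal 0 1) := by rw [h1]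
    _ = _ := by rw [integral_poly8]; ring

lemma moment2 (a b c d e : ℝ) :
    ∫ p : ℝ × ℝ, (a + b * p.1 + c * p.2 + d * p.1 ^ 2 + e * (p.1 * p.2)) ^ 2 ∂((gaussianReal 0 1).prod (gaussianReal 0 1))
      = e^2 + 3*d^2 + c^2 + b^2 + 2*a*d + a^2 := by
  have H : ∀ (P : Polynomial ℝ) (j : ℕ),
      Integrable (fun p : ℝ × ℝ => Polynomial.eval p.1 P * p.2 ^ j) ((gaussianReal 0 1).prod (gaussianReal 0 1)) :=
    fun P j => (integrable_polyeval P).mul_prod (gint j)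
  have hint : Integrable
      (fun p : ℝ × ℝ => (a + b * p.1 + c * p.2 + d * p.1 ^ 2 + e * (p.1 * p.2)) ^ 2) ((gaussianReal 0 1).prod (gaussianReal 0 1)) := by
    refine (((H ((Polynomial.C a + Polynomial.C b * Polynomial.X + Polynomial.C d * Polynomial.X ^ 2) ^ 2) 0).add
      (H (Polynomial.C 2 * (Polynomial.C a + Polynomial.C b * Polynomial.X + Polynomial.C d * Polynomial.X ^ 2) * (Polynomial.C c + Polynomial.C e * Polynomial.X)) 1)).add
      (H ((Polynomial.C c + Polynomial.C e * Polynomial.X) ^ 2) 2)).congr (Filter.Eventually.of_forall fun p => ?_)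
    simp only [Pi.add_apply, Polynomial.eval_add, Polynomial.eval_mul, Polynomial.eval_pow,
      Polynomial.eval_C, Polynomial.eval_X, Polynomial.eval_ofNat]
    ring
  rw [integral_prod _ hint]
  have h1 : (fun u : ℝ => ∫ v, (a + b * u + c * v + d * u ^ 2 + e * (u * v)) ^ 2
        ∂(gaussianReal 0 1))
      = fun u : ℝ => (c^2 + a^2) + (2*c*e + 2*a*b) * u ^ 1 + (e^2 + b^2 + 2*a*d) * u ^ 2 + (2*b*d) * u ^ 3 + (d^2) * u ^ 4 := by
    funext u
    rw [show (fun v : ℝ => (a + b * u + c * v + d * u ^ 2 + e * (u * v)) ^ 2)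
        = fun v : ℝ => ((a + b * u + d * u ^ 2) + (c + e * u) * v) ^ 2 from
        funext fun v => by ring, inner2]
    ring
  calc ∫ u, ∫ v, (a + b * u + c * v + d * u ^ 2 + e * (u * v)) ^ 2
        ∂(gaussianReal 0 1) ∂(gaussianReal 0 1)
      = ∫ u, ((c^2 + a^2) + (2*c*e + 2*a*b) * u ^ 1 + (e^2 + b^2 + 2*a*d) * u ^ 2 + (2*b*d) * u ^ 3 + (d^2) * u ^ 4) ∂(gaussianReal 0 1) := by rw [h1]
    _ = _ := by rw [integral_poly4]; ring

lemma moment4_map (μX μY σX σY ρ s m : ℝ) :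
    ∫ p : ℝ × ℝ, ((μX + σX * p.1) * (μY + σY * (ρ * p.1 + s * p.2)) - m) ^ 4 ∂((gaussianReal 0 1).prod (gaussianReal 0 1))
      = 9*(s * σX * σY)^4 + 90*(ρ * σX * σY)^2*(s * σX * σY)^2 + 105*(ρ * σX * σY)^4 + 18*(μX * σY * s)^2*(s * σX * σY)^2 + 18*(μX * σY * s)^2*(ρ * σX * σY)^2 + 3*(μX * σY * s)^4 + 72*(μX * σY * ρ + μY * σX)*(μX * σY * s)*(ρ * σX * σY)*(s * σX * σY) + 18*(μX * σY * ρ + μY * σX)^2*(s * σX * σY)^2 + 90*(μX * σY * ρ + μY * σX)^2*(ρ * σX * σY)^2 + 6*(μX * σY * ρ + μY * σX)^2*(μX * σY * s)^2 + 3*(μX * σY * ρ + μY * σX)^4 + 36*(μX * μY - m)*(ρ * σX * σY)*(s * σX * σY)^2 + 60*(μX * μY - m)*(ρ * σX * σY)^3 + 12*(μX * μY - m)*(μX * σY * s)^2*(ρ * σX * σY) + 24*(μX * μY - m)*(μX * σY * ρ + μY * σX)*(μX * σY * s)*(s * σX * σY) + 36*(μX * μY - m)*(μX * σY * ρ + μY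 * σX)^2*(ρ * σX * σY) + 6*(μX * μY - m)^2*(s * σX * σY)^2 + 18*(μX * μY - m)^2*(ρ * σX * σY)^2 + 6*(μX * μY - m)^2*(μX * σY * s)^2 + 6*(μX * μY - m)^2*(μX * σY * ρ + μY * σX)^2 + 4*(μX * μY - m)^3*(ρ * σX * σY) + (μX * μY - m)^4 := by
  rw [show (fun p : ℝ × ℝ => ((μX + σX * p.1) * (μY + σY * (ρ * p.1 + s * p.2)) - m) ^ 4)
      = fun p : ℝ × ℝ => ((μX * μY - m) + (μX * σY * ρ + μY * σX) * p.1 + (μX * σY * s) * p.2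
          + (ρ * σX * σY) * p.1 ^ 2 + (s * σX * σY) * (p.1 * p.2)) ^ 4 from
      funext fun p => by ring]
  exact moment4 (μX * μY - m) (μX * σY * ρ + μY * σX) (μX * σY * s) (ρ * σX * σY) (s * σX * σY)

lemma moment2_map (μX μY σX σY ρ s m : ℝ) :
    ∫ p : ℝ × ℝ, ((μX + σX * p.1) * (μY + σY * (ρ * p.1 + s * p.2)) - m) ^ 2 ∂((gaussianReal 0 1).prod (gaussianReal 0 1))
      = (s * σX * σY)^2 + 3*(ρ * σX * σY)^2 + (μX * σY * s)^2 + (μX * σY * ρ + μY * σX)^2 + 2*(μX * μY - m)*(ρ * σX * σY) + (μX * μY - m)^2 := by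
  rw [show (fun p : ℝ × ℝ => ((μX + σX * p.1) * (μY + σY * (ρ * p.1 + s * p.2)) - m) ^ 2)
      = fun p : ℝ × ℝ => ((μX * μY - m) + (μX * σY * ρ + μY * σX) * p.1 + (μX * σY * s) * p.2
          + (ρ * σX * σY) * p.1 ^ 2 + (s * σX * σY) * (p.1 * p.2)) ^ 2 from
      funext fun p => by ring]
  exact moment2 (μX * μY - m) (μX * σY * ρ + μY * σX) (μX * σY * s) (ρ * σX * σY) (s * σX * σY)

lemma PN_moment4 (μX μY σX σY ρ m : ℝ) :
    ∫ x, (x - m) ^ 4 ∂(PN μX μY σX σY ρ) = 9*((Real.sqrt (1 - ρ ^ 2)) * σX * σY)^4 + 90*(ρ * σX * σY)^2*((Real.sqrt (1 - ρ ^ 2)) * σX * σY)^2 + 105*(ρ * σX * σY)^4 + 18*(μX * σY * (Real.sqrt (1 - ρ ^ 2)))^2*((Real.sqrt (1 - ρ ^ 2)) * σX * σY)^2 + 18*(μX * σY * (Real.sqrt (1 - ρ ^ 2)))^2*(ρ * σX * σY)^2 + 3*(μX * σY * (Real.sqrt (1 - ρ ^ 2)))^4 + 72*(μX * σY * ρ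 + μY * σX)*(μX * σY * (Real.sqrt (1 - ρ ^ 2)))*(ρ * σX * σY)*((Real.sqrt (1 - ρ ^ 2)) * σX * σY) + 18*(μX * σY * ρ + μY * σX)^2*((Real.sqrt (1 - ρ ^ 2)) * σX * σY)^2 + 90*(μX * σY * ρ + μY * σX)^2*(ρ * σX * σY)^2 + 6*(μX * σY * ρ + μY * σX)^2*(μX * σY * (Real.sqrt (1 - ρ ^ 2)))^2 + 3*(μX * σY * ρ + μY * σX)^4 + 36*(μX * μY - m)*(ρ * σX * σY)*((Real.sqrt (1 - ρ ^ 2)) * σX * σY)^2 + 60*(μX * μY - m)*(ρ * σX * σY)^3 + 12*(μX * μY - m)*(μX * σY * (Real.sqrt (1 - ρ ^ 2)))^2*(ρ * σX * σY) + 24*(μX * μY - m)*(μX * σY * ρ + μY * σX)*(μX * σY * (Real.sqrt (1 - ρ ^ 2)))*((Real.sqrt (1 - ρ ^ 2)) * σX * σY) + 36*(μX * μY - m)*(μX * σY * ρ + μY * σX)^2*(ρ * σX * σY) + 6*(μX * μY - m)^2*((Real.sqrt (1 - ρ ^ 2)) * σX * σY)^2 + 18*(μX * μY - m)^2*(ρ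 * σX * σY)^2 + 6*(μX * μY - m)^2*(μX * σY * (Real.sqrt (1 - ρ ^ 2)))^2 + 6*(μX * μY - m)^2*(μX * σY * ρ + μY * σX)^2 + 4*(μX * μY - m)^3*(ρ * σX * σY) + (μX * μY - m)^4 := by
  rw [PN, integral_map (f := fun x : ℝ => (x - m) ^ 4)
    (Measurable.aemeasurable (by fun_prop)) (Continuous.aestronglyMeasurable (by fun_prop))]
  exact moment4_map μX μY σX σY ρ (Real.sqrt (1 - ρ ^ 2)) m

lemma PN_moment2 (μX μY σX σY ρ m : ℝ) :
    ∫ x, (x - m) ^ 2 ∂(PN μX μY σX σY ρ) = ((Real.sqrt (1 - ρ ^ 2)) * σX * σY)^2 + 3*(ρ * σX * σY)^2 + (μX * σY * (Real.sqrt (1 - ρ ^ 2)))^2 + (μX * σY * ρ + μY * σX)^2 + 2*(μX * μY - m)*(ρ * σX * σY) + (μX * μY - m)^2 := by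
  rw [PN, integral_map (f := fun x : ℝ => (x - m) ^ 2)
    (Measurable.aemeasurable (by fun_prop)) (Continuous.aestronglyMeasurable (by fun_prop))]
  exact moment2_map μX μY σX σY ρ (Real.sqrt (1 - ρ ^ 2)) m

/-- The kurtosis of `Z ∼ PN(μX, μY; σX², σY²; ρ)`, i.e. `E[(Z-m)⁴] / (E[(Z-m)²])²` where
`m = E[Z] = μXμY + ρσXσY` (with `r_X = μX/σX`, `r_Y = μY/σY`). -/
theorem kurtosis_PN
    (μX μY σX σY ρ : ℝ) (hσX : 0 < σX) (hσY : 0 < σY)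
    (hρ₁ : -1 < ρ) (hρ₂ : ρ < 1)
    (rX rY : ℝ) (hrX : rX = μX / σX) (hrY : rY = μY / σY)
    (m : ℝ) (hm : m = μX * μY + ρ * σX * σY) :
    (∫ x, (x - m) ^ 4 ∂(PN μX μY σX σY ρ))
        / (∫ x, (x - m) ^ 2 ∂(PN μX μY σX σY ρ)) ^ 2
      = (3 * (rX ^ 4 + rY ^ 4 + 4 * ρ * rX * rY * (rX ^ 2 + rY ^ 2)
              + 2 * (2 * ρ ^ 2 + 1) * rX ^ 2 * rY ^ 2)
          + 3 * (2 * (7 * ρ ^ 2 + 3) * (rX ^ 2 + rY ^ 2) + 4 * ρ * (3 * ρ ^ 2 + 7) * rX * rY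
              + 3 * ρ ^ 4 + 14 * ρ ^ 2 + 3))
        / (rX ^ 2 + rY ^ 2 + 2 * ρ * rX * rY + ρ ^ 2 + 1) ^ 2 := by
  have hμX : μX = rX * σX := by rw [hrX, div_mul_cancel₀ _ hσX.ne']
  have hμY : μY = rY * σY := by rw [hrY, div_mul_cancel₀ _ hσY.ne']
  have hs2 : (Real.sqrt (1 - ρ ^ 2)) ^ 2 = 1 - ρ ^ 2 := Real.sq_sqrt (by nlinarith)
  have hK : 0 < rX ^ 2 + rY ^ 2 + 2 * ρ * rX * rY + ρ ^ 2 + 1 := by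
    nlinarith [sq_nonneg (rX + ρ * rY), sq_nonneg rY, sq_nonneg ρ,
      mul_pos (show (0:ℝ) < 1 - ρ by linarith) (show (0:ℝ) < 1 + ρ by linarith)]
  have hT4 : ∫ x, (x - m) ^ 4 ∂(PN μX μY σX σY ρ)
      = σX ^ 4 * σY ^ 4 * (3 * (rX ^ 4 + rY ^ 4 + 4 * ρ * rX * rY * (rX ^ 2 + rY ^ 2)
              + 2 * (2 * ρ ^ 2 + 1) * rX ^ 2 * rY ^ 2)
          + 3 * (2 * (7 * ρ ^ 2 + 3) * (rX ^ 2 + rY ^ 2) + 4 * ρ * (3 * ρ ^ 2 + 7) * rX * rY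
              + 3 * ρ ^ 4 + 14 * ρ ^ 2 + 3)) := by
    rw [PN_moment4, hm, hμX, hμY]
    linear_combination (3 * rX ^ 4 * σX ^ 4 * σY ^ 4 * ρ ^ 2 + 3 * rX ^ 4 * σX ^ 4 * σY ^ 4 * (Real.sqrt (1 - ρ  ^  2))  ^  2 + 3 * rX ^ 4 * σX ^ 4 * σY ^ 4 + 12 * rX ^ 3 * rY * σX ^ 4 * σY ^ 4 * ρ + 6 * rX ^ 2 * rY ^ 2 * σX ^ 4 * σY ^ 4 + 60 * rX ^ 2 * σX ^ 4 * σY ^ 4 * ρ ^ 2 + 18 * rX ^ 2 * σX ^ 4 * σY ^ 4 * (Real.sqrt (1 - ρ  ^  2))  ^  2 + 18 * rX ^ 2 * σX ^ 4 * σY ^ 4 + 84 * rX * rY * σX ^ 4 * σY ^ 4 * ρ + 18 * rY ^ 2 * σX ^ 4 * σY ^ 4 + 51 * σX ^ 4 * σY ^ 4 * ρ ^ 2 + 9 * σX ^ 4 * σY ^ 4 * (Real.sqrt (1 - ρ  ^  2))  ^  2 + 9 * σX ^ 4 * σY ^ 4) * hs2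
  have hT2 : ∫ x, (x - m) ^ 2 ∂(PN μX μY σX σY ρ)
      = σX ^ 2 * σY ^ 2 * (rX ^ 2 + rY ^ 2 + 2 * ρ * rX * rY + ρ ^ 2 + 1) := by
    rw [PN_moment2, hm, hμX, hμY]
    linear_combination (rX ^ 2 * σX ^ 2 * σY ^ 2 + σX ^ 2 * σY ^ 2) * hs2
  rw [hT4, hT2]
  field_simp
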